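/- For every natural number n ≥ 0, in the polynomial ring ℤ[x, y] one has the congruence (x+y)^(2^(n+3)) − x^(2^(n+3)) − y^(2^(n+3)) ≡ 8·x^(2^n)·y^(7·2^n) + 12·x^(2·2^n)·y^(6·2^n) + 8·x^(3·2^n)·y^(5·2^n) + 6·x^(4·2^n)·y^(4·2^n) + 8·x^(5·2^n)·y^(3·2^n) + 12·x^(6·2^n)·y^(2·2^n) + 8·x^(7·2^n)·y^(2^n) modulo 16. -/
import Mathlib

open MvPolynomial

private noncomputable def G (p q : MvPolynomial (Fin 2) ℤ) : MvPolynomial (Fin 2) ℤ :=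
  p^8 + q^8 + 8*p*q^7 + 12*p^2*q^6 + 8*p^3*q^5 + 6*p^4*q^4 + 8*p^5*q^3 + 12*p^6*q^2 + 8*p^7*q

private lemma G_base (p q : MvPolynomial (Fin 2) ℤ) :
    (p + q)^8 = G p q + 16 * (p^2*q^6 + 3*p^3*q^5 + 4*p^4*q^4 + 3*p^5*q^3 + p^6*q^2) := by
  simp only [G]; ring

private lemma G_sq (p q : MvPolynomial (Fin 2) ℤ) :
    (G p q)^2 = G (p^2) (q^2) + 16 *
      (p*q^15 + 5*p^2*q^14 + 13*p^3*q^13 + 17*p^4*q^12 + 19*p^5*q^11 + 22*p^6*q^10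
        + 31*p^7*q^9 + 36*p^8*q^8 + 31*p^9*q^7 + 22*p^10*q^6 + 19*p^11*q^5 + 17*p^12*q^4
        + 13*p^13*q^3 + 5*p^14*q^2 + p^15*q) := by
  simp only [G]; ring

private lemma main_ind (n : ℕ) : ∃ Q : MvPolynomial (Fin 2) ℤ,
    (X 0 + X 1 : MvPolynomial (Fin 2) ℤ) ^ (2 ^ (n + 3))
      = G ((X 0) ^ 2 ^ n) ((X 1) ^ 2 ^ n) + 16 * Q := by
  induction n with
  | zero =>
    refine ⟨(X 0)^2*(X 1)^6 + 3*(X 0)^3*(X 1)^5 + 4*(X 0)^4*(X 1)^4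
      + 3*(X 0)^5*(X 1)^3 + (X 0)^6*(X 1)^2, ?_⟩
    simpa using G_base (X 0 : MvPolynomial (Fin 2) ℤ) (X 1)
  | succ n ih =>
    obtain ⟨Q, hQ⟩ := ih
    have h1 : (X 0 + X 1 : MvPolynomial (Fin 2) ℤ) ^ (2 ^ (n + 1 + 3))
        = ((X 0 + X 1 : MvPolynomial (Fin 2) ℤ) ^ (2 ^ (n + 3)))^2 := by
      rw [← pow_mul]
      ring_nf
    have h2 : ((X 0 : MvPolynomial (Fin 2) ℤ) ^ 2 ^ n)^2 = (X 0) ^ 2 ^ (n+1) := by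
      rw [← pow_mul]; ring_nf
    have h3 : ((X 1 : MvPolynomial (Fin 2) ℤ) ^ 2 ^ n)^2 = (X 1) ^ 2 ^ (n+1) := by
      rw [← pow_mul]; ring_nf
    set p := (X 0 : MvPolynomial (Fin 2) ℤ) ^ 2 ^ n with hp
    set q := (X 1 : MvPolynomial (Fin 2) ℤ) ^ 2 ^ n with hq
    refine ⟨(p*q^15 + 5*p^2*q^14 + 13*p^3*q^13 + 17*p^4*q^12 + 19*p^5*q^11 + 22*p^6*q^10
        + 31*p^7*q^9 + 36*p^8*q^8 + 31*p^9*q^7 + 22*p^10*q^6 + 19*p^11*q^5 + 17*p^12*q^4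
        + 13*p^13*q^3 + 5*p^14*q^2 + p^15*q) + 2 * G p q * Q + 16 * Q^2, ?_⟩
    rw [h1, hQ, add_sq]
    rw [G_sq, h2, h3]
    ring

theorem pow_two_pow_add_three_congruence (n : ℕ) :
    ∀ m : Fin 2 →₀ ℕ, (16 : ℤ) ∣ MvPolynomial.coeff m
      (((X 0 + X 1 : MvPolynomial (Fin 2) ℤ) ^ (2 ^ (n + 3))
          - (X 0) ^ (2 ^ (n + 3)) - (X 1) ^ (2 ^ (n + 3)))
        - (8 * (X 0) ^ (2 ^ n) * (X 1) ^ (7 * 2 ^ n)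
          + 12 * (X 0) ^ (2 * 2 ^ n) * (X 1) ^ (6 * 2 ^ n)
          + 8 * (X 0) ^ (3 * 2 ^ n) * (X 1) ^ (5 * 2 ^ n)
          + 6 * (X 0) ^ (4 * 2 ^ n) * (X 1) ^ (4 * 2 ^ n)
          + 8 * (X 0) ^ (5 * 2 ^ n) * (X 1) ^ (3 * 2 ^ n)
          + 12 * (X 0) ^ (6 * 2 ^ n) * (X 1) ^ (2 * 2 ^ n)
          + 8 * (X 0) ^ (7 * 2 ^ n) * (X 1) ^ (2 ^ n))) := by
  intro m
  obtain ⟨Q, hQ⟩ := main_ind n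
  have key : (((X 0 + X 1 : MvPolynomial (Fin 2) ℤ) ^ (2 ^ (n + 3))
          - (X 0) ^ (2 ^ (n + 3)) - (X 1) ^ (2 ^ (n + 3)))
        - (8 * (X 0) ^ (2 ^ n) * (X 1) ^ (7 * 2 ^ n)
          + 12 * (X 0) ^ (2 * 2 ^ n) * (X 1) ^ (6 * 2 ^ n)
          + 8 * (X 0) ^ (3 * 2 ^ n) * (X 1) ^ (5 * 2 ^ n)
          + 6 * (X 0) ^ (4 * 2 ^ n) * (X 1) ^ (4 * 2 ^ n)
          + 8 * (X 0) ^ (5 * 2 ^ n) * (X 1) ^ (3 * 2 ^ n)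
          + 12 * (X 0) ^ (6 * 2 ^ n) * (X 1) ^ (2 * 2 ^ n)
          + 8 * (X 0) ^ (7 * 2 ^ n) * (X 1) ^ (2 ^ n))) = C 16 * Q := by
    have e8 : 2 ^ (n + 3) = 2 ^ n * 8 := by ring
    have e : ∀ k, k * 2 ^ n = 2 ^ n * k := fun k => mul_comm _ _
    rw [hQ]
    simp only [G, e8, e 2, e 3, e 4, e 5, e 6, e 7, pow_mul]
    rw [show (C 16 : MvPolynomial (Fin 2) ℤ) = 16 by simp [map_ofNat]]
    ring
  rw [key, coeff_C_mul]
  exact dvd_mul_right _ _
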